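/- Let F₁, …, F_K : 𝒞_n → ℝ and let μ be the probability measure on 𝒞_n with μ(x) ∝ exp(Σ_{k=1}^K F_k(x)). Then the ℓ²→ℓ² operator norm of the influence matrix of μ satisfies ‖A^μ‖_op ≤ Σ_{k=1}^K ‖D^{F_k}‖_op. -/

import Mathlib

noncomputable section

open scoped BigOperators

/-- Discrete derivative on the cube: `∂_i F(x) = (F(x^{i+}) − F(x^{i−}))/2`. -/
def dderiv {n : ℕ} (F : (Fin n → Bool) → ℝ) (i : Fin n) (b : Fin n → Bool) : ℝ :=
  (F (Function.update b i true) - F (Function.update b i false)) / 2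

/-- The derivative matrix `D^F_{ij} = max_x |∂_i ∂_j F(x)|`. -/
def derivMat {n : ℕ} (F : (Fin n → Bool) → ℝ) (i j : Fin n) : ℝ :=
  ⨆ b : Fin n → Bool, |dderiv (dderiv F j) i b|

/-- The `ℓ²→ℓ²` operator norm of an `n×n` matrix. -/
def matOpNorm {n : ℕ} (M : Fin n → Fin n → ℝ) : ℝ :=
  sSup { r : ℝ | ∃ x : Fin n → ℝ, (∑ i, x i ^ 2) = 1 ∧
    r = Real.sqrt (∑ i, (∑ j, M i j * x j) ^ 2) }

/-- The conditional mean of the -th spin given the other coordinates. -/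
def condMean {n : ℕ} (μ : (Fin n → Bool) → ℝ) (i : Fin n) (b : Fin n → Bool) : ℝ :=
  (μ (Function.update b i true) - μ (Function.update b i false)) /
    (μ (Function.update b i true) + μ (Function.update b i false))

/-- The influence matrix of a measure on the cube: zero on the diagonal, and for
`i ≠ j`, half of the maximal change of `condMean μ i` when flipping the `j`-th bit. -/
def inflMat {n : ℕ} (μ : (Fin n → Bool) → ℝ) (i j : Fin n) : ℝ :=
  if i = j then 0
  else (1 / 2) * ⨆ b : Fin n → Bool,
    |condMean μ i (Function.update b j true) - condMean μ i (Function.update b j false)|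

/-! ### Auxiliary lemmas -/

lemma aux_div_div (a b c : ℝ) (hc : c ≠ 0) : (a / c) / (b / c) = a / b := by
  rcases eq_or_ne b 0 with rfl | hb
  · simp
  · field_simp

lemma tanh_hasDerivAt (x : ℝ) : HasDerivAt Real.tanh (1 / Real.cosh x ^ 2) x := by
  have h := (Real.hasDerivAt_sinh x).div (Real.hasDerivAt_cosh x) (Real.cosh_pos x).ne'
  have heq : (fun y => Real.sinh y / Real.cosh y) = Real.tanh := by
    funext y; rw [Real.tanh_eq_sinh_div_cosh]
  rw [show (Real.sinh / Real.cosh) = Real.tanh from heq] at h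
  refine h.congr_deriv ?_
  have h2 := Real.cosh_sq_sub_sinh_sq x
  congr 1
  nlinarith [Real.cosh_pos x]

lemma tanh_lipschitz (a b : ℝ) : |Real.tanh a - Real.tanh b| ≤ |a - b| := by
  have lip : LipschitzWith 1 Real.tanh := by
    apply lipschitzWith_of_nnnorm_deriv_le (fun x => (tanh_hasDerivAt x).differentiableAt)
    intro x
    rw [(tanh_hasDerivAt x).deriv, ← NNReal.coe_le_coe, coe_nnnorm, Real.norm_eq_abs,
      NNReal.coe_one, abs_of_nonneg (by positivity)]
    rw [div_le_one (by positivity)]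
    nlinarith [Real.one_le_cosh x]
  have := lip.dist_le_mul a b
  simpa [Real.dist_eq] using this

lemma tanh_ratio (u v : ℝ) :
    (Real.exp u - Real.exp v) / (Real.exp u + Real.exp v) = Real.tanh ((u - v) / 2) := by
  have htanh : Real.tanh ((u - v) / 2) =
      (Real.exp ((u - v) / 2) - Real.exp (-((u - v) / 2))) /
      (Real.exp ((u - v) / 2) + Real.exp (-((u - v) / 2))) := by
    rw [Real.tanh_eq_sinh_div_cosh, Real.sinh_eq, Real.cosh_eq]
    exact aux_div_div _ _ 2 two_ne_zero
  have h1 : Real.exp u = Real.exp ((u + v) / 2) * Real.exp ((u - v) / 2) := by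
    rw [← Real.exp_add]; congr 1; ring
  have h2 : Real.exp v = Real.exp ((u + v) / 2) * Real.exp (-((u - v) / 2)) := by
    rw [← Real.exp_add]; congr 1; ring
  rw [htanh, h1, h2, ← mul_sub, ← mul_add, mul_div_mul_left _ _ (Real.exp_pos _).ne']

lemma bdd_range {n : ℕ} (f : (Fin n → Bool) → ℝ) : BddAbove (Set.range f) :=
  (Set.finite_range f).bddAbove

lemma derivMat_nonneg {n : ℕ} (F : (Fin n → Bool) → ℝ) (i j : Fin n) :
    0 ≤ derivMat F i j := by
  unfold derivMat
  exact le_trans (abs_nonneg _)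
    (le_ciSup (bdd_range fun b => |dderiv (dderiv F j) i b|) default)

lemma inflMat_nonneg {n : ℕ} (μ : (Fin n → Bool) → ℝ) (i j : Fin n) :
    0 ≤ inflMat μ i j := by
  unfold inflMat
  split
  · exact le_rfl
  · have : (0:ℝ) ≤ ⨆ b : Fin n → Bool,
        |condMean μ i (Function.update b j true) - condMean μ i (Function.update b j false)| :=
      le_trans (abs_nonneg _) (le_ciSup (bdd_range fun b =>
        |condMean μ i (Function.update b j true) - condMean μ i (Function.update b j false)|)
        default)
    linarith

lemma dderiv_sum {n : ℕ} {ι : Type*} (s : Finset ι) (F : ι → (Fin n → Bool) → ℝ) (i : Fin n) :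
    dderiv (fun b => ∑ k ∈ s, F k b) i = fun b => ∑ k ∈ s, dderiv (F k) i b := by
  funext b
  simp [dderiv, sub_div, Finset.sum_sub_distrib, Finset.sum_div]

lemma dderiv_comm {n : ℕ} (F : (Fin n → Bool) → ℝ) {i j : Fin n} (h : i ≠ j)
    (b : Fin n → Bool) : dderiv (dderiv F j) i b = dderiv (dderiv F i) j b := by
  simp only [dderiv, Function.update_comm h]
  ring

/-! ### Operator norm lemmas -/

lemma matOpNorm_bddAbove {n : ℕ} (M : Fin n → Fin n → ℝ) :
    BddAbove { r : ℝ | ∃ x : Fin n → ℝ, (∑ i, x i ^ 2) = 1 ∧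
      r = Real.sqrt (∑ i, (∑ j, M i j * x j) ^ 2) } := by
  refine ⟨Real.sqrt (∑ i, ∑ j, M i j ^ 2), ?_⟩
  rintro r ⟨x, hx, rfl⟩
  apply Real.sqrt_le_sqrt
  apply Finset.sum_le_sum
  intro i _
  calc (∑ j, M i j * x j) ^ 2 ≤ (∑ j, M i j ^ 2) * ∑ j, x j ^ 2 :=
        Finset.sum_mul_sq_le_sq_mul_sq _ _ _
    _ = ∑ j, M i j ^ 2 := by rw [hx, mul_one]

lemma matOpNorm_nonneg {n : ℕ} (M : Fin n → Fin n → ℝ) : 0 ≤ matOpNorm M :=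
  Real.sSup_nonneg fun r hr => by
    obtain ⟨x, hx, rfl⟩ := hr; exact Real.sqrt_nonneg _

lemma sqrt_le_matOpNorm {n : ℕ} (M : Fin n → Fin n → ℝ) (x : Fin n → ℝ)
    (hx : (∑ i, x i ^ 2) = 1) :
    Real.sqrt (∑ i, (∑ j, M i j * x j) ^ 2) ≤ matOpNorm M :=
  le_csSup (matOpNorm_bddAbove M) ⟨x, hx, rfl⟩

lemma matOpNorm_mono {n : ℕ} {A B : Fin n → Fin n → ℝ} (hA : ∀ i j, 0 ≤ A i j)
    (hAB : ∀ i j, A i j ≤ B i j) : matOpNorm A ≤ matOpNorm B := by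
  apply Real.sSup_le _ (matOpNorm_nonneg B)
  rintro r ⟨x, hx, rfl⟩
  have hy : (∑ i, |x i| ^ 2) = 1 := by simpa [sq_abs] using hx
  calc Real.sqrt (∑ i, (∑ j, A i j * x j) ^ 2)
      ≤ Real.sqrt (∑ i, (∑ j, B i j * |x j|) ^ 2) := by
        apply Real.sqrt_le_sqrt
        apply Finset.sum_le_sum
        intro i _
        have h1 : |∑ j, A i j * x j| ≤ ∑ j, B i j * |x j| := by
          calc |∑ j, A i j * x j| ≤ ∑ j, |A i j * x j| := Finset.abs_sum_le_sum_abs _ _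
            _ = ∑ j, A i j * |x j| := by
                apply Finset.sum_congr rfl; intro j _
                rw [abs_mul, abs_of_nonneg (hA i j)]
            _ ≤ ∑ j, B i j * |x j| := by
                apply Finset.sum_le_sum; intro j _
                exact mul_le_mul_of_nonneg_right (hAB i j) (abs_nonneg _)
        have h2 := abs_le.mp h1
        exact sq_le_sq' h2.1 h2.2
    _ ≤ matOpNorm B := sqrt_le_matOpNorm B _ hy

lemma euclid_triangle {n : ℕ} (a b : Fin n → ℝ) :
    Real.sqrt (∑ i, (a i + b i) ^ 2) ≤
      Real.sqrt (∑ i, a i ^ 2) + Real.sqrt (∑ i, b i ^ 2) := by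
  set A := Real.sqrt (∑ i, a i ^ 2) with hA
  set B := Real.sqrt (∑ i, b i ^ 2) with hB
  have hA0 : 0 ≤ A := Real.sqrt_nonneg _
  have hB0 : 0 ≤ B := Real.sqrt_nonneg _
  have hA2 : A ^ 2 = ∑ i, a i ^ 2 := Real.sq_sqrt (by positivity)
  have hB2 : B ^ 2 = ∑ i, b i ^ 2 := Real.sq_sqrt (by positivity)
  have hCS : ∑ i, a i * b i ≤ A * B := by
    have h := Finset.sum_mul_sq_le_sq_mul_sq Finset.univ a b
    have hsq : (∑ i, a i * b i) ^ 2 ≤ (A * B) ^ 2 := by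
      rw [mul_pow, hA2, hB2]; exact h
    nlinarith [mul_nonneg hA0 hB0]
  rw [← Real.sqrt_sq (by positivity : (0:ℝ) ≤ A + B)]
  apply Real.sqrt_le_sqrt
  have hexp : ∑ i, (a i + b i) ^ 2
      = (∑ i, a i ^ 2) + 2 * (∑ i, a i * b i) + ∑ i, b i ^ 2 := by
    rw [Finset.mul_sum, ← Finset.sum_add_distrib, ← Finset.sum_add_distrib]
    apply Finset.sum_congr rfl; intros; ring
  have : (A + B) ^ 2 = A ^ 2 + 2 * (A * B) + B ^ 2 := by ring
  rw [hexp, this]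
  nlinarith

lemma matOpNorm_add_le {n : ℕ} (A B : Fin n → Fin n → ℝ) :
    matOpNorm (fun i j => A i j + B i j) ≤ matOpNorm A + matOpNorm B := by
  apply Real.sSup_le _ (add_nonneg (matOpNorm_nonneg A) (matOpNorm_nonneg B))
  rintro r ⟨x, hx, rfl⟩
  have hsum : ∀ i, (∑ j, (A i j + B i j) * x j)
      = (∑ j, A i j * x j) + ∑ j, B i j * x j := by
    intro i
    rw [← Finset.sum_add_distrib]
    apply Finset.sum_congr rfl; intros; ring
  calc Real.sqrt (∑ i, (∑ j, (A i j + B i j) * x j) ^ 2)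
      = Real.sqrt (∑ i, ((∑ j, A i j * x j) + ∑ j, B i j * x j) ^ 2) := by
        congr 1; apply Finset.sum_congr rfl; intro i _; rw [hsum]
    _ ≤ Real.sqrt (∑ i, (∑ j, A i j * x j) ^ 2)
        + Real.sqrt (∑ i, (∑ j, B i j * x j) ^ 2) := euclid_triangle _ _
    _ ≤ matOpNorm A + matOpNorm B :=
        add_le_add (sqrt_le_matOpNorm A x hx) (sqrt_le_matOpNorm B x hx)

lemma matOpNorm_zero {n : ℕ} : matOpNorm (fun _ _ : Fin n => (0:ℝ)) = 0 := by
  apply le_antisymm _ (matOpNorm_nonneg _)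
  apply Real.sSup_le _ le_rfl
  rintro r ⟨x, hx, rfl⟩
  simp

lemma matOpNorm_sum_le {n : ℕ} {ι : Type*} (s : Finset ι) (M : ι → Fin n → Fin n → ℝ) :
    matOpNorm (fun i j => ∑ k ∈ s, M k i j) ≤ ∑ k ∈ s, matOpNorm (M k) := by
  classical
  induction s using Finset.induction_on with
  | empty => simp [matOpNorm_zero]
  | insert a s hnot ih =>
      calc matOpNorm (fun i j => ∑ k ∈ insert a s, M k i j)
          = matOpNorm (fun i j => M a i j + ∑ k ∈ s, M k i j) := by
            congr 1; funext i j; rw [Finset.sum_insert hnot]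
        _ ≤ matOpNorm (M a) + matOpNorm (fun i j => ∑ k ∈ s, M k i j) :=
            matOpNorm_add_le _ _
        _ ≤ matOpNorm (M a) + ∑ k ∈ s, matOpNorm (M k) := by linarith
        _ = ∑ k ∈ insert a s, matOpNorm (M k) := by rw [Finset.sum_insert hnot]

/-! ### Conditional mean as tanh of discrete derivative -/

lemma condMean_eq {n K : ℕ} (F : Fin K → (Fin n → Bool) → ℝ)
    (μ : (Fin n → Bool) → ℝ)
    (hμ : ∀ b, μ b = Real.exp (∑ k, F k b) / ∑ b', Real.exp (∑ k, F k b'))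
    (i : Fin n) (b : Fin n → Bool) :
    condMean μ i b = Real.tanh (dderiv (fun b => ∑ k, F k b) i b) := by
  have hZ : (0:ℝ) < ∑ b' : Fin n → Bool, Real.exp (∑ k, F k b') :=
    Finset.sum_pos (fun _ _ => Real.exp_pos _) Finset.univ_nonempty
  set u := ∑ k, F k (Function.update b i true) with hu
  set v := ∑ k, F k (Function.update b i false) with hv
  have : condMean μ i b = (Real.exp u - Real.exp v) / (Real.exp u + Real.exp v) := by
    simp only [condMean, hμ]
    rw [div_sub_div_same, ← add_div, aux_div_div _ _ _ hZ.ne']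
  rw [this, tanh_ratio]
  congr 1

/-! ### Entrywise bound -/

lemma inflMat_le {n K : ℕ} (F : Fin K → (Fin n → Bool) → ℝ)
    (μ : (Fin n → Bool) → ℝ)
    (hμ : ∀ b, μ b = Real.exp (∑ k, F k b) / ∑ b', Real.exp (∑ k, F k b'))
    (i j : Fin n) : inflMat μ i j ≤ ∑ k, derivMat (F k) i j := by
  by_cases hij : i = j
  · rw [inflMat, if_pos hij]
    exact Finset.sum_nonneg fun k _ => derivMat_nonneg _ _ _
  · rw [inflMat, if_neg hij]
    set H : (Fin n → Bool) → ℝ := fun b => ∑ k, F k b with hH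
    have key : ∀ b : Fin n → Bool,
        |condMean μ i (Function.update b j true) - condMean μ i (Function.update b j false)|
          ≤ 2 * ∑ k, derivMat (F k) i j := by
      intro b
      rw [condMean_eq F μ hμ, condMean_eq F μ hμ]
      calc |Real.tanh (dderiv H i (Function.update b j true))
            - Real.tanh (dderiv H i (Function.update b j false))|
          ≤ |dderiv H i (Function.update b j true) - dderiv H i (Function.update b j false)| :=
            tanh_lipschitz _ _
        _ = 2 * |dderiv (dderiv H i) j b| := by
            rw [show dderiv H i (Function.update b j true)
                - dderiv H i (Function.update b j false) = 2 * dderiv (dderiv H i) j b by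
              simp [dderiv]; ring]
            rw [abs_mul]; norm_num
        _ = 2 * |dderiv (dderiv H j) i b| := by rw [dderiv_comm H (Ne.symm hij) b]
        _ = 2 * |∑ k, dderiv (dderiv (F k) j) i b| := by
            have e1 : dderiv H j = fun b => ∑ k, dderiv (F k) j b := dderiv_sum _ _ _
            rw [e1, dderiv_sum Finset.univ (fun k => dderiv (F k) j) i]
        _ ≤ 2 * ∑ k, |dderiv (dderiv (F k) j) i b| := by
            have := Finset.abs_sum_le_sum_abs (fun k => dderiv (dderiv (F k) j) i b)
              (Finset.univ : Finset (Fin K))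
            linarith
        _ ≤ 2 * ∑ k, derivMat (F k) i j := by
            have : ∀ k : Fin K, |dderiv (dderiv (F k) j) i b| ≤ derivMat (F k) i j := by
              intro k
              exact le_ciSup (bdd_range fun b => |dderiv (dderiv (F k) j) i b|) b
            have hs := Finset.sum_le_sum (fun k (_ : k ∈ Finset.univ) => this k)
            linarith
    have hsup : (⨆ b : Fin n → Bool,
        |condMean μ i (Function.update b j true) - condMean μ i (Function.update b j false)|)
          ≤ 2 * ∑ k, derivMat (F k) i j :=
      ciSup_le key
    linarith

/-- **Additivity of Dobrushin-type influence bounds** (Lemma `additivedob` of the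
paper): if `μ(x) ∝ exp(Σ_k F_k(x))`, then `‖A^μ‖_op ≤ Σ_k ‖D^{F_k}‖_op`. -/
theorem influence_le_sum_derivMat (n K : ℕ) (F : Fin K → (Fin n → Bool) → ℝ)
    (μ : (Fin n → Bool) → ℝ)
    (hμ : ∀ b, μ b = Real.exp (∑ k, F k b) / ∑ b', Real.exp (∑ k, F k b')) :
    matOpNorm (inflMat μ) ≤ ∑ k, matOpNorm (derivMat (F k)) := by
  calc matOpNorm (inflMat μ)
      ≤ matOpNorm (fun i j => ∑ k, derivMat (F k) i j) :=
        matOpNorm_mono (inflMat_nonneg μ) (inflMat_le F μ hμ)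
    _ ≤ ∑ k, matOpNorm (derivMat (F k)) := matOpNorm_sum_le _ _
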